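/- Let P be an r×r matrix of trigonometric polynomials and v a ℂ^r-valued trigonometric polynomial on ℝ^d satisfying Condition Z_k: v*(2·)P − v* has a zero of order k at 0, and v*(2·)P has a zero of order k at each πl for l ∈ {0,1}^d \ {0}. Let Φ̂ : ℝ^d → ℂ^r be entire with Φ̂(2·) = PΦ̂. Then for every α ∈ 2πℤ^d \ {0}, the function ω ↦ v*(ω)Φ̂(ω+α) has a zero of order k at ω = 0. -/

import Mathlib

open Matrix

noncomputable def lattPt (d : ℕ) (a : Fin d → ℤ) : EuclideanSpace ℝ (Fin d) :=
  (EuclideanSpace.equiv (Fin d) ℝ).symm fun i => 2 * Real.pi * (a i : ℝ)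

noncomputable def cornerPt (d : ℕ) (l : Fin d → ℤ) : EuclideanSpace ℝ (Fin d) :=
  (EuclideanSpace.equiv (Fin d) ℝ).symm fun i => Real.pi * (l i : ℝ)

section Aux

variable {E F G H : Type*} [NormedAddCommGroup E] [NormedSpace ℝ E]
  [NormedAddCommGroup F] [NormedSpace ℝ F] [NormedAddCommGroup G] [NormedSpace ℝ G]
  [NormedAddCommGroup H] [NormedSpace ℝ H]

lemma fderiv_shift (g : E → F) (c x : E) :
    fderiv ℝ (fun y => g (y + c)) x = fderiv ℝ g (x + c) := by
  by_cases h : DifferentiableAt ℝ g (x + c)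
  · have h1 : HasFDerivAt (fun y : E => y + c) (ContinuousLinearMap.id ℝ E) x :=
      (hasFDerivAt_id x).add_const c
    have h2 := h.hasFDerivAt.comp x h1
    simpa [Function.comp_def] using h2.fderiv
  · have h2 : ¬ DifferentiableAt ℝ (fun y => g (y + c)) x := by
      intro hd
      have h3 : DifferentiableAt ℝ (fun y : E => y - c) (x + c) :=
        (differentiable_id.sub_const c) (x + c)
      have hd' : DifferentiableAt ℝ (fun y => g (y + c)) (x + c - c) := by simpa using hd
      have h4 := hd'.comp (x + c) h3
      apply h
      have : ((fun y => g (y + c)) ∘ fun y : E => y - c) = g := by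
        funext y; simp
      rwa [this] at h4
    rw [fderiv_zero_of_not_differentiableAt h, fderiv_zero_of_not_differentiableAt h2]

lemma iteratedFDeriv_shift (g : E → F) (c : E) (n : ℕ) (x : E) :
    iteratedFDeriv ℝ n (fun y => g (y + c)) x = iteratedFDeriv ℝ n g (x + c) := by
  induction n generalizing x with
  | zero => ext m; simp
  | succ n ih =>
    have hfun : (iteratedFDeriv ℝ n fun y => g (y + c)) =
        fun y => iteratedFDeriv ℝ n g (y + c) := funext fun y => ih y
    simp only [iteratedFDeriv_succ_eq_comp_left, Function.comp_apply]
    rw [hfun, fderiv_shift]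

lemma zero_of_comp_clm (L : G →L[ℝ] E) {f : E → F} (hf : ContDiff ℝ ⊤ f) (x : G) {n : ℕ}
    (h : iteratedFDeriv ℝ n f (L x) = 0) :
    iteratedFDeriv ℝ n (fun y => f (L y)) x = 0 := by
  have h2 := L.iteratedFDeriv_comp_right hf x (i := n) le_top
  rw [show (fun y => f (L y)) = f ∘ L from rfl, h2, h]
  ext m
  simp

lemma zero_of_comp_half {f : E → F} (hf : ContDiff ℝ ⊤ f) {n : ℕ}
    (h : iteratedFDeriv ℝ n f 0 = 0) :
    iteratedFDeriv ℝ n (fun y => f ((2⁻¹:ℝ) • y)) 0 = 0 := by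
  set L : E →L[ℝ] E := (2⁻¹:ℝ) • ContinuousLinearMap.id ℝ E with hLdef
  have hLapp : ∀ y : E, L y = (2⁻¹:ℝ) • y := fun y => rfl
  have heq : (fun y : E => f ((2⁻¹:ℝ) • y)) = fun y => f (L y) := by
    funext y; rw [hLapp]
  rw [heq]
  exact zero_of_comp_clm L hf 0 (by rw [map_zero L]; exact h)

lemma zero_of_bilinear (B : E →L[ℝ] F →L[ℝ] G) {f : H → E} {g : H → F}
    (hf : ContDiff ℝ ⊤ f) (hg : ContDiff ℝ ⊤ g) {x : H} {k : ℕ}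
    (h : ∀ n < k, iteratedFDeriv ℝ n f x = 0) :
    ∀ n < k, iteratedFDeriv ℝ n (fun y => B (f y) (g y)) x = 0 := by
  intro n hn
  have hb := B.norm_iteratedFDeriv_le_of_bilinear hf hg x (n := n) le_top
  have hz : ∀ i ∈ Finset.range (n + 1),
      (n.choose i : ℝ) * ‖iteratedFDeriv ℝ i f x‖ * ‖iteratedFDeriv ℝ (n - i) g x‖ = 0 := by
    intro i hi
    have : iteratedFDeriv ℝ i f x = 0 :=
      h i (lt_of_le_of_lt (Nat.lt_succ_iff.mp (Finset.mem_range.mp hi)) hn)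
    simp [this]
  rw [Finset.sum_eq_zero hz, mul_zero] at hb
  exact norm_le_zero_iff.mp hb

end Aux

noncomputable def dotCLM (r : ℕ) : (Fin r → ℂ) →L[ℝ] (Fin r → ℂ) →L[ℝ] ℂ :=
  LinearMap.toContinuousLinearMap
  { toFun := fun x => LinearMap.toContinuousLinearMap
      { toFun := fun y => x ⬝ᵥ y
        map_add' := fun a b => by simp [dotProduct, Finset.sum_add_distrib, mul_add]
        map_smul' := fun c y => by
          simp [dotProduct, Finset.smul_sum, mul_smul_comm, mul_left_comm] }
    map_add' := fun a b => by
      ext y; simp [dotProduct, Finset.sum_add_distrib, add_mul]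
    map_smul' := fun c x => by
      ext y; simp [dotProduct, Finset.smul_sum, smul_mul_assoc, mul_assoc] }

@[simp] lemma dotCLM_apply (r : ℕ) (x y : Fin r → ℂ) : dotCLM r x y = x ⬝ᵥ y := rfl

set_option maxHeartbeats 2000000 in
/-- Condition `Z_k` implies that for every `α ∈ 2πℤ^d \ 0` the
function `ω ↦ v*(ω) Φ̂(ω+α)` has a zero of order `k` at the origin.  Here `P` is a
(2π-periodic, smooth, e.g. trigonometric polynomial) matrix mask, `v` a 2π-periodic
smooth vector (e.g. a trigonometric polynomial), and `Φ̂` smooth (e.g. entire) with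
`Φ̂(2·) = P Φ̂`.  A zero of order `k` means all derivatives of order `< k` vanish. -/
theorem conditionZk_implies_SF (d r k : ℕ)
    (P : EuclideanSpace ℝ (Fin d) → Matrix (Fin r) (Fin r) ℂ)
    (v Φ : EuclideanSpace ℝ (Fin d) → (Fin r → ℂ))
    (hPsmooth : ∀ i j, ContDiff ℝ ⊤ fun ω => P ω i j)
    (hvsmooth : ContDiff ℝ ⊤ v)
    (hΦsmooth : ContDiff ℝ ⊤ Φ)
    (hPper : ∀ (ω : EuclideanSpace ℝ (Fin d)) (β : Fin d → ℤ), P (ω + lattPt d β) = P ω)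
    (hvper : ∀ (ω : EuclideanSpace ℝ (Fin d)) (β : Fin d → ℤ), v (ω + lattPt d β) = v ω)
    (href : ∀ ω : EuclideanSpace ℝ (Fin d), Φ ((2 : ℝ) • ω) = P ω *ᵥ Φ ω)
    (hZ0 : ∀ n < k,
      iteratedFDeriv ℝ n
        (fun ω : EuclideanSpace ℝ (Fin d) => star (v ((2 : ℝ) • ω)) ᵥ* P ω - star (v ω))
        0 = 0)
    (hZl : ∀ l : Fin d → ℤ, (∀ i, l i = 0 ∨ l i = 1) → l ≠ 0 → ∀ n < k,
      iteratedFDeriv ℝ n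
        (fun ω : EuclideanSpace ℝ (Fin d) => star (v ((2 : ℝ) • ω)) ᵥ* P ω)
        (cornerPt d l) = 0) :
    ∀ α : Fin d → ℤ, α ≠ 0 → ∀ n < k,
      iteratedFDeriv ℝ n
        (fun ω : EuclideanSpace ℝ (Fin d) => star (v ω) ⬝ᵥ Φ (ω + lattPt d α))
        0 = 0 := by
  classical
  -- smoothness of auxiliary functions
  have hstarv : ContDiff ℝ ⊤ (fun u : EuclideanSpace ℝ (Fin d) => star (v u)) := by
    apply contDiff_pi.mpr
    intro i
    exact Complex.conjCLE.contDiff.comp ((contDiff_pi.mp hvsmooth) i)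
  have h2smul : ContDiff ℝ ⊤ (fun u : EuclideanSpace ℝ (Fin d) => (2:ℝ) • u) :=
    contDiff_id.const_smul (2:ℝ)
  have hhalf : ContDiff ℝ ⊤ (fun u : EuclideanSpace ℝ (Fin d) => (2⁻¹:ℝ) • u) :=
    contDiff_id.const_smul (2⁻¹:ℝ)
  have hG : ContDiff ℝ ⊤
      (fun u : EuclideanSpace ℝ (Fin d) => star (v ((2:ℝ) • u)) ᵥ* P u) := by
    apply contDiff_pi.mpr
    intro j
    have heq : (fun u : EuclideanSpace ℝ (Fin d) => (star (v ((2:ℝ) • u)) ᵥ* P u) j)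
        = fun u => ∑ i, star (v ((2:ℝ) • u) i) * P u i j := by
      funext u; simp [Matrix.vecMul, dotProduct]
    rw [heq]
    apply ContDiff.sum
    intro i _
    exact (Complex.conjCLE.contDiff.comp
      (((contDiff_pi.mp hvsmooth) i).comp h2smul)).mul (hPsmooth i j)
  -- basic lattice identities
  have hc0 : cornerPt d 0 = 0 := by
    ext i; simp [cornerPt]
  have hsplit : ∀ β : Fin d → ℤ,
      cornerPt d β = cornerPt d (fun i => β i % 2) + lattPt d (fun i => β i / 2) := by
    intro β; ext i
    have h := Int.mul_ediv_add_emod (β i) 2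
    have h2 : (β i : ℝ) = 2 * ((β i / 2 : ℤ) : ℝ) + ((β i % 2 : ℤ) : ℝ) := by
      exact_mod_cast h.symm
    simp [cornerPt, lattPt, EuclideanSpace.equiv]
    rw [h2]; ring
  -- key refinement identity
  have key : ∀ (β : Fin d → ℤ) (ω : EuclideanSpace ℝ (Fin d)),
      star (v ω) ⬝ᵥ Φ (ω + lattPt d β) =
      (star (v ((2:ℝ) • ((2⁻¹:ℝ) • ω + cornerPt d fun i => β i % 2)))
        ᵥ* P ((2⁻¹:ℝ) • ω + cornerPt d fun i => β i % 2))
        ⬝ᵥ Φ ((2⁻¹:ℝ) • ω + cornerPt d β) := by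
    intro β ω
    have e1 : ω + lattPt d β = (2:ℝ) • ((2⁻¹:ℝ) • ω + cornerPt d β) := by
      ext i; simp [lattPt, cornerPt, EuclideanSpace.equiv]; ring
    have e2 : (2:ℝ) • ((2⁻¹:ℝ) • ω + cornerPt d (fun i => β i % 2))
        = ω + lattPt d (fun i => β i % 2) := by
      ext i; simp [lattPt, cornerPt, EuclideanSpace.equiv]; ring
    have e3 : (2⁻¹:ℝ) • ω + cornerPt d β =
        ((2⁻¹:ℝ) • ω + cornerPt d (fun i => β i % 2)) + lattPt d (fun i => β i / 2) := by
      rw [hsplit β, add_assoc]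
    rw [e1, href, dotProduct_mulVec]
    congr 1
    rw [e3, hPper]
    rw [e2, hvper]
  -- main induction
  suffices H : ∀ (N : ℕ) (β : Fin d → ℤ), (∑ i, (β i).natAbs) ≤ N → β ≠ 0 → ∀ n < k,
      iteratedFDeriv ℝ n
        (fun ω : EuclideanSpace ℝ (Fin d) => star (v ω) ⬝ᵥ Φ (ω + lattPt d β)) 0 = 0 by
    intro α hα
    exact H (∑ i, (α i).natAbs) α le_rfl hα
  intro N
  induction N with
  | zero =>
    intro β hsum hβ
    exfalso
    apply hβ
    funext i
    exact Int.natAbs_eq_zero.mp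
      ((Finset.sum_eq_zero_iff.mp (Nat.le_zero.mp hsum)) i (Finset.mem_univ i))
  | succ N ih =>
    intro β hsum hβ n hn
    by_cases hlz : (fun i => β i % 2) = (0 : Fin d → ℤ)
    · -- even case
      have hβγ : ∀ i, β i = 2 * (β i / 2) := by
        intro i
        have h1 : β i % 2 = 0 := by have := congrFun hlz i; simpa using this
        omega
      have hγ0 : (fun i => β i / 2) ≠ (0 : Fin d → ℤ) := by
        intro h
        apply hβ
        funext i
        show β i = 0
        have h2 := hβγ i
        have h3 : β i / 2 = 0 := by have := congrFun h i; simpa using this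
        omega
      have hsum' : (∑ i, ((β i / 2 : ℤ)).natAbs) ≤ N := by
        have h1 : ∀ i, (β i).natAbs = 2 * ((β i / 2 : ℤ)).natAbs := by
          intro i; have := hβγ i; omega
        have h2 : (∑ i, ((β i / 2 : ℤ)).natAbs) + (∑ i, ((β i / 2 : ℤ)).natAbs)
            ≤ N + 1 := by
          calc (∑ i, ((β i / 2 : ℤ)).natAbs) + (∑ i, ((β i / 2 : ℤ)).natAbs)
              = ∑ i, (β i).natAbs := by
                rw [← Finset.sum_add_distrib]
                exact Finset.sum_congr rfl fun i _ => by rw [h1 i]; omega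
            _ ≤ N + 1 := hsum
        have h3 : 1 ≤ ∑ i, ((β i / 2 : ℤ)).natAbs := by
          obtain ⟨i, hi⟩ : ∃ i, (β i / 2 : ℤ) ≠ 0 := by
            by_contra h
            push_neg at h
            exact hγ0 (funext h)
          calc 1 ≤ ((β i / 2 : ℤ)).natAbs := Int.natAbs_pos.mpr hi
            _ ≤ ∑ i, ((β i / 2 : ℤ)).natAbs :=
                Finset.single_le_sum (f := fun i => ((β i / 2 : ℤ)).natAbs)
                  (fun _ _ => Nat.zero_le _) (Finset.mem_univ i)
        omega
      have e4 : ∀ ω : EuclideanSpace ℝ (Fin d),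
          (2⁻¹:ℝ) • ω + cornerPt d (fun i => β i % 2) = (2⁻¹:ℝ) • ω := by
        intro ω; rw [hlz, hc0, add_zero]
      have e5 : cornerPt d β = lattPt d (fun i => β i / 2) := by
        rw [hsplit β, hlz, hc0, zero_add]
      have hkey2 : (fun ω : EuclideanSpace ℝ (Fin d) => star (v ω) ⬝ᵥ Φ (ω + lattPt d β)) =
          (fun ω : EuclideanSpace ℝ (Fin d) =>
            dotCLM r ((fun z => star (v ((2:ℝ) • z)) ᵥ* P z - star (v z)) ((2⁻¹:ℝ) • ω))
              (Φ ((2⁻¹:ℝ) • ω + lattPt d fun i => β i / 2)))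
          + (fun ω : EuclideanSpace ℝ (Fin d) =>
              star (v ((2⁻¹:ℝ) • ω)) ⬝ᵥ Φ ((2⁻¹:ℝ) • ω + lattPt d fun i => β i / 2)) := by
        funext ω
        have h1 := key β ω
        rw [e4 ω, e5] at h1
        show star (v ω) ⬝ᵥ Φ (ω + lattPt d β) = _ + _
        rw [h1]
        simp only [dotCLM_apply, Pi.add_apply]
        rw [sub_dotProduct]
        ring
      rw [hkey2]
      -- smoothness of the two summands
      have hf1 : ContDiff ℝ ⊤ (fun ω : EuclideanSpace ℝ (Fin d) =>
          (fun z => star (v ((2:ℝ) • z)) ᵥ* P z - star (v z)) ((2⁻¹:ℝ) • ω)) :=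
        (hG.sub hstarv).comp hhalf
      have hf2 : ContDiff ℝ ⊤ (fun ω : EuclideanSpace ℝ (Fin d) =>
          Φ ((2⁻¹:ℝ) • ω + lattPt d fun i => β i / 2)) :=
        hΦsmooth.comp (hhalf.add contDiff_const)
      have hf3 : ContDiff ℝ ⊤ (fun ω : EuclideanSpace ℝ (Fin d) =>
          star (v ((2⁻¹:ℝ) • ω)) ⬝ᵥ Φ ((2⁻¹:ℝ) • ω + lattPt d fun i => β i / 2)) :=
        ((dotCLM r).isBoundedBilinearMap.contDiff).comp ((hstarv.comp hhalf).prodMk hf2)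
      have hA : ContDiff ℝ ⊤ (fun ω : EuclideanSpace ℝ (Fin d) =>
          dotCLM r ((fun z => star (v ((2:ℝ) • z)) ᵥ* P z - star (v z)) ((2⁻¹:ℝ) • ω))
            (Φ ((2⁻¹:ℝ) • ω + lattPt d fun i => β i / 2))) :=
        ((dotCLM r).isBoundedBilinearMap.contDiff).comp (hf1.prodMk hf2)
      rw [iteratedFDeriv_add_apply (hA.contDiffAt.of_le le_top) (hf3.contDiffAt.of_le le_top)]
      have t1 : iteratedFDeriv ℝ n (fun ω : EuclideanSpace ℝ (Fin d) =>
          dotCLM r ((fun z => star (v ((2:ℝ) • z)) ᵥ* P z - star (v z)) ((2⁻¹:ℝ) • ω))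
            (Φ ((2⁻¹:ℝ) • ω + lattPt d fun i => β i / 2))) 0 = 0 := by
        apply zero_of_bilinear (dotCLM r) hf1 hf2 _ n hn
        intro m hm
        exact zero_of_comp_half (hG.sub hstarv) (hZ0 m hm)
      have t2 : iteratedFDeriv ℝ n (fun ω : EuclideanSpace ℝ (Fin d) =>
          star (v ((2⁻¹:ℝ) • ω)) ⬝ᵥ Φ ((2⁻¹:ℝ) • ω + lattPt d fun i => β i / 2)) 0 = 0 := by
        have hfin : ContDiff ℝ ⊤ (fun z : EuclideanSpace ℝ (Fin d) =>
            star (v z) ⬝ᵥ Φ (z + lattPt d fun i => β i / 2)) :=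
          ((dotCLM r).isBoundedBilinearMap.contDiff).comp
            (hstarv.prodMk (hΦsmooth.comp (contDiff_id.add contDiff_const)))
        exact zero_of_comp_half hfin (ih (fun i => β i / 2) hsum' hγ0 n hn)
      rw [t1, t2, add_zero]
    · -- odd case
      have hl01 : ∀ i, (β i % 2) = 0 ∨ (β i % 2) = 1 := fun i => Int.emod_two_eq_zero_or_one _
      have hkey1 : (fun ω : EuclideanSpace ℝ (Fin d) => star (v ω) ⬝ᵥ Φ (ω + lattPt d β)) =
          fun ω : EuclideanSpace ℝ (Fin d) =>
            dotCLM r ((fun z => star (v ((2:ℝ) • z)) ᵥ* P z)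
                ((2⁻¹:ℝ) • ω + cornerPt d fun i => β i % 2))
              (Φ ((2⁻¹:ℝ) • ω + cornerPt d β)) := by
        funext ω
        rw [key β ω]
        rfl
      rw [hkey1]
      have hf1 : ContDiff ℝ ⊤ (fun ω : EuclideanSpace ℝ (Fin d) =>
          (fun z => star (v ((2:ℝ) • z)) ᵥ* P z)
            ((2⁻¹:ℝ) • ω + cornerPt d fun i => β i % 2)) :=
        hG.comp (hhalf.add contDiff_const)
      have hf2 : ContDiff ℝ ⊤ (fun ω : EuclideanSpace ℝ (Fin d) =>
          Φ ((2⁻¹:ℝ) • ω + cornerPt d β)) :=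
        hΦsmooth.comp (hhalf.add contDiff_const)
      apply zero_of_bilinear (dotCLM r) hf1 hf2 _ n hn
      intro m hm
      have hshifted : ContDiff ℝ ⊤ (fun z : EuclideanSpace ℝ (Fin d) =>
          star (v ((2:ℝ) • (z + cornerPt d fun i => β i % 2)))
            ᵥ* P (z + cornerPt d fun i => β i % 2)) :=
        hG.comp (contDiff_id.add contDiff_const)
      apply zero_of_comp_half hshifted
      have hs := iteratedFDeriv_shift
        (fun u : EuclideanSpace ℝ (Fin d) => star (v ((2:ℝ) • u)) ᵥ* P u)
        (cornerPt d fun i => β i % 2) m 0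
      rw [zero_add] at hs
      rw [hs]
      exact hZl (fun i => β i % 2) hl01 hlz m hm
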